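/- For every integer n ≥ 1, a_n = (1/n^3) · Σ_{k=1}^{n} k^4 · C(n,k)^2 · C(n+k,k)^2 / ((4(k−1)^2 − 1) · (n+k)^2). -/

import Mathlib

noncomputable def a (n : ℕ) : ℝ :=
  (1 / (n : ℝ)) * ∑ k ∈ Finset.range n,
    ((n - 1).choose k : ℝ) ^ 2 * ((n + k).choose k : ℝ) ^ 2 / (4 * (k : ℝ) ^ 2 - 1)

theorem a_rewrite (n : ℕ) (hn : 1 ≤ n) :
    a n = (1 / (n : ℝ) ^ 3) * ∑ k ∈ Finset.Icc 1 n,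
      (k : ℝ) ^ 4 * (n.choose k : ℝ) ^ 2 * ((n + k).choose k : ℝ) ^ 2 /
        ((4 * ((k : ℝ) - 1) ^ 2 - 1) * ((n : ℝ) + (k : ℝ)) ^ 2) := by
  have hn0 : (n : ℝ) ≠ 0 := by positivity
  unfold a
  rw [show Finset.Icc 1 n = Finset.map ⟨(· + 1), add_left_injective 1⟩ (Finset.range n) by
    ext x
    simp only [Finset.mem_Icc, Finset.mem_map, Finset.mem_range, Function.Embedding.coeFn_mk]
    constructor
    · rintro ⟨h1, h2⟩; exact ⟨x - 1, by omega, by omega⟩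
    · rintro ⟨a, ha, rfl⟩; omega, Finset.sum_map]
  simp only [Function.Embedding.coeFn_mk]
  rw [Finset.mul_sum, Finset.mul_sum]
  refine Finset.sum_congr rfl fun k hk => ?_
  have hk1 : ((k : ℝ) + 1) ≠ 0 := by positivity
  have hd : (4 * (k : ℝ) ^ 2 - 1) ≠ 0 := by
    rcases Nat.eq_zero_or_pos k with h | h
    · subst h; norm_num
    · have : (1 : ℝ) ≤ (k : ℝ) := by exact_mod_cast h
      nlinarith
  have hnk : ((n : ℝ) + (k + 1 : ℕ)) ≠ 0 := by positivity
  have h1 : (n : ℝ) * ((n - 1).choose k : ℝ) = (n.choose (k + 1) : ℝ) * ((k : ℝ) + 1) := by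
    have := Nat.add_one_mul_choose_eq (n - 1) k
    rw [show n - 1 + 1 = n by omega] at this
    exact_mod_cast congrArg (Nat.cast : ℕ → ℝ) this
  have h2 : ((n : ℝ) + (k : ℝ) + 1) * ((n + k).choose k : ℝ) =
      ((n + k + 1).choose (k + 1) : ℝ) * ((k : ℝ) + 1) := by
    have := Nat.add_one_mul_choose_eq (n + k) k
    exact_mod_cast congrArg (Nat.cast : ℕ → ℝ) this
  have e1 : (n.choose (k + 1) : ℝ) = (n : ℝ) * ((n - 1).choose k : ℝ) / ((k : ℝ) + 1) := by
    field_simp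
    linarith [h1]
  have e2 : ((n + (k + 1)).choose (k + 1) : ℝ) =
      ((n : ℝ) + (k : ℝ) + 1) * ((n + k).choose k : ℝ) / ((k : ℝ) + 1) := by
    rw [show n + (k + 1) = n + k + 1 by ring]
    field_simp
    linarith [h2]
  push_cast
  rw [e1, e2]
  push_cast at hnk
  have hd2 : 4 * ((k : ℝ) + 1 - 1) ^ 2 - 1 ≠ 0 := by
    have : ((k : ℝ) + 1 - 1) = (k : ℝ) := by ring
    rw [this]; exact hd
  field_simp
  ring
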